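/- Let ν_⊗ be the product measure on [-π/2,π/2]² with density (1/2) cos x cos y dx dy. Then both marginals of ν_⊗ equal γ (dγ = cos φ dφ), ν_⊗ is symmetric under coordinate swap, and for every λ > 0 the moment of resistance satisfies R_I[ν_⊗, λ] = -3λ/4. -/

import Mathlib

open Real MeasureTheory

noncomputable def gammaM : Measure ℝ :=
  (volume.restrict (Set.Icc (-(π/2)) (π/2))).withDensity
    (fun φ => ENNReal.ofReal (Real.cos φ))

/-- the product measure `ν_⊗` with density `(1/2) cos x cos y` on the square. -/
noncomputable def nuProd : Measure (ℝ × ℝ) :=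
  (volume.restrict ((Set.Icc (-(π/2)) (π/2)) ×ˢ (Set.Icc (-(π/2)) (π/2)))).withDensity
    (fun p => ENNReal.ofReal ((1/2) * Real.cos p.1 * Real.cos p.2))

noncomputable def zeta (x lam : ℝ) : ℝ :=
  Real.arcsin (Real.sqrt (1 - lam^2 * Real.cos x ^ 2))

/-- integrand of the moment of the resistance force for `0 < λ ≤ 1`. -/
noncomputable def cI (lam : ℝ) (p : ℝ × ℝ) : ℝ :=
  -((3/8) * ((lam * Real.sin p.1 + Real.sin (zeta p.1 lam))^3 / Real.sin (zeta p.1 lam)) *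
    (Real.sin p.1 + Real.sin p.2))

/-- integrand of the moment of the resistance force for `λ > 1`
(including the characteristic function `χ_{x ≥ arccos(1/λ)}`). -/
noncomputable def cI' (lam : ℝ) (p : ℝ × ℝ) : ℝ :=
  if Real.arccos (1/lam) ≤ p.1 then
    -((3/4) * ((lam^3 * Real.sin p.1 ^ 3 + 3 * lam * Real.sin p.1 * Real.sin (zeta p.1 lam) ^ 2)
        / Real.sin (zeta p.1 lam)) * (Real.sin p.1 + Real.sin p.2))
  else 0

/-- the normalized moment of resistance `R_I[ν, λ]`. -/
noncomputable def RI (ν : Measure (ℝ × ℝ)) (lam : ℝ) : ℝ :=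
  if lam ≤ 1 then ∫ p, cI lam p ∂ν else ∫ p, cI' lam p ∂ν

section Aux
open Set ENNReal NNReal

noncomputable def muI : Measure ℝ := volume.restrict (Set.Icc (-(π/2)) (π/2))

instance : IsFiniteMeasure muI := by
  constructor
  rw [muI, Measure.restrict_apply_univ, Real.volume_Icc]
  exact ENNReal.ofReal_lt_top

lemma restrict_sq : volume.restrict ((Set.Icc (-(π/2)) (π/2)) ×ˢ (Set.Icc (-(π/2)) (π/2)))
    = muI.prod muI := by
  rw [muI, Measure.prod_restrict, ← Measure.volume_eq_prod]

lemma prod_wd {f g : ℝ → ℝ≥0∞} (hf : Measurable f) (hg : Measurable g)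
    [SigmaFinite (muI.withDensity f)] [SigmaFinite (muI.withDensity g)] :
    (muI.withDensity f).prod (muI.withDensity g)
      = (muI.prod muI).withDensity (fun p => f p.1 * g p.2) := by
  refine Measure.prod_eq fun s t hs ht => ?_
  rw [withDensity_apply _ (hs.prod ht), ← Measure.prod_restrict,
    lintegral_prod_mul (hf.aemeasurable) (hg.aemeasurable),
    withDensity_apply _ hs, withDensity_apply _ ht]

lemma gammaM_def : gammaM = muI.withDensity (fun φ => ENNReal.ofReal (Real.cos φ)) := rfl

noncomputable def nuHalf : Measure ℝ :=
  muI.withDensity (fun φ => ENNReal.ofReal ((1/2) * Real.cos φ))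

lemma gammaM_univ : gammaM Set.univ = ENNReal.ofReal 2 := by
  rw [gammaM_def, withDensity_apply _ MeasurableSet.univ, Measure.restrict_univ, muI,
    ← ofReal_integral_eq_lintegral_ofReal]
  · congr 1
    rw [MeasureTheory.integral_Icc_eq_integral_Ioc,
      ← intervalIntegral.integral_of_le (by linarith [Real.pi_pos] : -(π/2) ≤ π/2)]
    simp [integral_cos]
    norm_num
  · exact continuous_cos.integrableOn_Icc
  · filter_upwards [ae_restrict_mem measurableSet_Icc] with x hx
    exact Real.cos_nonneg_of_mem_Icc hx

lemma nuHalf_eq : nuHalf = (ENNReal.ofReal (1/2)) • gammaM := by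
  rw [nuHalf, gammaM_def, ← withDensity_smul _ (by fun_prop)]
  congr 1
  funext φ
  simp only [Pi.smul_apply, smul_eq_mul]
  rw [← ENNReal.ofReal_mul (by norm_num)]

instance : IsFiniteMeasure gammaM := by
  constructor
  rw [gammaM_univ]; exact ENNReal.ofReal_lt_top

instance : IsFiniteMeasure nuHalf := by
  constructor
  rw [nuHalf_eq, Measure.smul_apply, gammaM_univ, smul_eq_mul]
  exact ENNReal.mul_lt_top ENNReal.ofReal_lt_top ENNReal.ofReal_lt_top

lemma nuHalf_univ : nuHalf Set.univ = 1 := by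
  rw [nuHalf_eq, Measure.smul_apply, gammaM_univ, smul_eq_mul,
    ← ENNReal.ofReal_mul (by norm_num)]
  norm_num

lemma nuProd_eq₁ : nuProd = nuHalf.prod gammaM := by
  rw [nuProd, restrict_sq, nuHalf, gammaM_def, prod_wd (by fun_prop) (by fun_prop)]
  refine withDensity_congr_ae ?_
  rw [← restrict_sq]
  filter_upwards [ae_restrict_mem (measurableSet_Icc.prod measurableSet_Icc)] with p hp
  have h1 := Real.cos_nonneg_of_mem_Icc hp.1
  rw [← ENNReal.ofReal_mul (by linarith)]

lemma nuProd_eq₂ : nuProd = gammaM.prod nuHalf := by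
  rw [nuProd, restrict_sq, nuHalf, gammaM_def, prod_wd (by fun_prop) (by fun_prop)]
  refine withDensity_congr_ae ?_
  rw [← restrict_sq]
  filter_upwards [ae_restrict_mem (measurableSet_Icc.prod measurableSet_Icc)] with p hp
  rw [← ENNReal.ofReal_mul (Real.cos_nonneg_of_mem_Icc hp.1)]
  ring_nf

lemma part1 : nuProd.map Prod.fst = gammaM := by
  rw [nuProd_eq₂, Measure.map_fst_prod, nuHalf_univ, one_smul]

lemma part2 : nuProd.map Prod.snd = gammaM := by
  rw [nuProd_eq₁, Measure.map_snd_prod, nuHalf_univ, one_smul]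

lemma part3 : nuProd.map Prod.swap = nuProd := by
  rw [nuProd_eq₂, Measure.prod_swap, ← nuProd_eq₁, ← nuProd_eq₂]


lemma hle : -(π/2) ≤ π/2 := by linarith [Real.pi_pos]

lemma integrable_muI {f : ℝ → ℝ} (hf : Continuous f) : Integrable f muI := by
  rw [muI]; exact hf.integrableOn_Icc

lemma L1 : ∫ y, Real.cos y ∂muI = 2 := by
  rw [muI, MeasureTheory.integral_Icc_eq_integral_Ioc,
    ← intervalIntegral.integral_of_le hle]
  simp [integral_cos]
  norm_num

lemma L2 : ∫ y, Real.sin y * Real.cos y ∂muI = 0 := by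
  rw [muI, MeasureTheory.integral_Icc_eq_integral_Ioc,
    ← intervalIntegral.integral_of_le hle]
  have h : ∀ y ∈ Set.uIcc (-(π/2)) (π/2), HasDerivAt (fun t => Real.sin t^2/2)
      (Real.sin y * Real.cos y) y := by
    intro y _
    have := ((Real.hasDerivAt_sin y).fun_pow 2).div_const 2
    convert! this using 1
    ring
  rw [intervalIntegral.integral_eq_sub_of_hasDerivAt h
    ((continuous_sin.mul continuous_cos).intervalIntegrable _ _)]
  simp

lemma inner_int (x K : ℝ) :
    ∫ y, (1/2)*Real.cos x*Real.cos y * (K*(Real.sin x + Real.sin y)) ∂muI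
      = K * Real.sin x * Real.cos x := by
  have e : (fun y => (1/2)*Real.cos x*Real.cos y * (K*(Real.sin x + Real.sin y)))
      = fun y => ((1/2)*Real.cos x*K*Real.sin x) * Real.cos y
        + ((1/2)*Real.cos x*K) * (Real.sin y * Real.cos y) := by
    funext y; ring
  rw [e, integral_add ((integrable_muI continuous_cos).const_mul _)
      ((integrable_muI (continuous_sin.fun_mul continuous_cos)).const_mul _),
    integral_const_mul, integral_const_mul, L1, L2]
  ring




lemma nuProd_integral_eq (f : ℝ × ℝ → ℝ)
    (hint : Integrable (fun p => (1/2)*Real.cos p.1*Real.cos p.2 * f p) (muI.prod muI)) :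
    ∫ p, f p ∂nuProd = ∫ x, (∫ y, (1/2)*Real.cos x*Real.cos y * f (x, y) ∂muI) ∂muI := by
  have h1 : ∫ p, f p ∂nuProd
      = ∫ p, ((1/2)*Real.cos p.1*Real.cos p.2).toNNReal • f p ∂(muI.prod muI) := by
    rw [nuProd, restrict_sq]
    exact integral_withDensity_eq_integral_smul (by fun_prop) f
  have h2 : (fun p : ℝ × ℝ => ((1/2)*Real.cos p.1*Real.cos p.2).toNNReal • f p)
      =ᵐ[muI.prod muI] fun p => (1/2)*Real.cos p.1*Real.cos p.2 * f p := by
    rw [← restrict_sq]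
    filter_upwards [ae_restrict_mem (measurableSet_Icc.prod measurableSet_Icc)] with p hp
    have h1 := Real.cos_nonneg_of_mem_Icc hp.1
    have h2 := Real.cos_nonneg_of_mem_Icc hp.2
    rw [NNReal.smul_def, Real.coe_toNNReal _ (by positivity), smul_eq_mul]
  rw [h1, integral_congr_ae h2, MeasureTheory.integral_prod _ hint]

lemma sin_zeta (x lam : ℝ) : Real.sin (zeta x lam) = Real.sqrt (1 - lam^2 * Real.cos x^2) := by
  rw [zeta, Real.sin_arcsin]
  · exact le_trans (by norm_num) (Real.sqrt_nonneg _)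
  · exact Real.sqrt_le_one.mpr (by nlinarith [sq_nonneg (lam*Real.cos x)])

noncomputable def gfun (lam x : ℝ) : ℝ :=
  -((3/8) * ((lam * Real.sin x + Real.sin (zeta x lam))^3 / Real.sin (zeta x lam)))

lemma g_bound {lam : ℝ} (hl0 : 0 < lam) (hl : lam ≤ 1) (x : ℝ) : |gfun lam x| ≤ 3 := by
  rw [gfun, sin_zeta, abs_neg, abs_mul]
  set σ := Real.sqrt (1 - lam^2 * Real.cos x^2) with hσdef
  have hin : 0 ≤ 1 - lam^2 * Real.cos x^2 := by
    nlinarith [Real.cos_sq_le_one x, sq_nonneg (Real.cos x), sq_nonneg lam]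
  have hσ0 : 0 ≤ σ := Real.sqrt_nonneg _
  have hσ1 : σ ≤ 1 := Real.sqrt_le_one.mpr (by nlinarith [sq_nonneg (lam*Real.cos x)])
  have hσsq : σ^2 = 1 - lam^2 * Real.cos x^2 := Real.sq_sqrt hin
  have habs : |lam * Real.sin x| ≤ σ := by
    have h1 : (lam * Real.sin x)^2 ≤ 1 - lam^2 * Real.cos x^2 := by
      nlinarith [Real.sin_sq_add_cos_sq x, sq_nonneg lam, sq_nonneg (Real.sin x)]
    calc |lam * Real.sin x| = Real.sqrt ((lam * Real.sin x)^2) := (Real.sqrt_sq_eq_abs _).symm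
      _ ≤ σ := Real.sqrt_le_sqrt h1
  rcases eq_or_lt_of_le hσ0 with hz | hσpos
  · simp [← hz, _root_.div_zero]
  · have hN : |lam * Real.sin x + σ| ≤ 2*σ := by
      calc |lam * Real.sin x + σ| ≤ |lam * Real.sin x| + |σ| := abs_add_le _ _
        _ ≤ σ + σ := by rw [abs_of_nonneg hσ0]; linarith
        _ = 2*σ := by ring
    have h2 : |(lam * Real.sin x + σ)^3 / σ| ≤ 8 := by
      rw [abs_div, abs_pow, abs_of_nonneg hσ0, div_le_iff₀ hσpos]
      have h3 : |lam * Real.sin x + σ|^3 ≤ (2*σ)^3 := pow_le_pow_left₀ (abs_nonneg _) hN 3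
      have h4 : σ^3 ≤ σ := by nlinarith [hσ1, hσ0]
      nlinarith [h3, h4]
    have h38 : |(3:ℝ)/8| = 3/8 := by norm_num
    rw [h38]
    nlinarith [h2]

lemma cont_inner (lam : ℝ) : Continuous fun x : ℝ => 1 - lam^2 * Real.cos x^2 :=
  continuous_const.sub (continuous_const.mul (Real.continuous_cos.pow 2))

lemma cont_sin_zeta (lam : ℝ) : Continuous fun x : ℝ => Real.sin (zeta x lam) := by
  unfold zeta
  exact Real.continuous_sin.comp (Real.continuous_arcsin.comp
    (Real.continuous_sqrt.comp (cont_inner lam)))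

lemma meas_cI (lam : ℝ) : Measurable (cI lam) := by
  unfold cI
  have hden : Measurable fun p : ℝ × ℝ => Real.sin (zeta p.1 lam) :=
    ((cont_sin_zeta lam).measurable).comp measurable_fst
  have hnum : Measurable fun p : ℝ × ℝ => (lam * Real.sin p.1 + Real.sin (zeta p.1 lam))^3 :=
    ((measurable_const.mul (Real.measurable_sin.comp measurable_fst)).add hden).pow_const 3
  exact (((measurable_const.mul (hnum.div hden)).mul
    ((Real.measurable_sin.comp measurable_fst).add
      (Real.measurable_sin.comp measurable_snd)))).neg

lemma abs_cI_le {lam : ℝ} (hl0 : 0 < lam) (hl : lam ≤ 1) (p : ℝ × ℝ) : |cI lam p| ≤ 6 := by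
  have hg := g_bound hl0 hl p.1
  rw [gfun, abs_neg] at hg
  have hs : |Real.sin p.1 + Real.sin p.2| ≤ 2 := by
    calc |Real.sin p.1 + Real.sin p.2| ≤ |Real.sin p.1| + |Real.sin p.2| := abs_add_le _ _
      _ ≤ 2 := by
        have := Real.abs_sin_le_one p.1
        have := Real.abs_sin_le_one p.2
        linarith
  rw [cI, abs_neg, abs_mul]
  calc |3 / 8 * ((lam * Real.sin p.1 + Real.sin (zeta p.1 lam)) ^ 3 / Real.sin (zeta p.1 lam))|
        * |Real.sin p.1 + Real.sin p.2| ≤ 3 * 2 := by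
        apply mul_le_mul hg hs (abs_nonneg _) (by norm_num)
    _ = 6 := by norm_num

lemma hint_cI {lam : ℝ} (hl0 : 0 < lam) (hl : lam ≤ 1) :
    Integrable (fun p : ℝ × ℝ => (1/2)*Real.cos p.1*Real.cos p.2 * cI lam p) (muI.prod muI) := by
  apply (integrable_const (3:ℝ)).mono'
  · exact ((measurable_const.mul (Real.measurable_cos.comp measurable_fst)).mul
      (Real.measurable_cos.comp measurable_snd)).mul (meas_cI lam) |>.aestronglyMeasurable
  · refine Filter.Eventually.of_forall fun p => ?_
    have h1 := abs_cI_le hl0 hl p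
    have h2 : |(1/2)*Real.cos p.1*Real.cos p.2| ≤ 1/2 := by
      rw [abs_mul, abs_mul]
      have := Real.abs_cos_le_one p.1
      have := Real.abs_cos_le_one p.2
      have h38 : |(1:ℝ)/2| = 1/2 := by norm_num
      rw [h38]
      nlinarith [abs_nonneg (Real.cos p.1), abs_nonneg (Real.cos p.2)]
    rw [Real.norm_eq_abs, abs_mul]
    nlinarith [abs_nonneg ((1/2)*Real.cos p.1*Real.cos p.2), abs_nonneg (cI lam p)]

lemma hasDeriv_F {lam : ℝ} (hl0 : 0 < lam) (hl : lam < 1) (x : ℝ) :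
    HasDerivAt (fun t => -(3/8)*(lam*Real.sin t^3*Real.sqrt (1 - lam^2*Real.cos t^2)
        + lam^2*Real.sin t^4 + (1-lam^2)*Real.sin t^2/2))
      (-((3/8) * ((lam * Real.sin x + Real.sqrt (1 - lam^2*Real.cos x^2))^3
          / Real.sqrt (1 - lam^2*Real.cos x^2)) * Real.sin x * Real.cos x)) x := by
  have hpos : (0:ℝ) < 1 - lam^2*Real.cos x^2 := by
    nlinarith [Real.cos_sq_le_one x, sq_nonneg (Real.cos x)]
  set σ := Real.sqrt (1 - lam^2*Real.cos x^2) with hσdef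
  have hσpos : 0 < σ := Real.sqrt_pos.2 hpos
  have hσsq : σ^2 = 1 - lam^2*Real.cos x^2 := Real.sq_sqrt (le_of_lt hpos)
  have h1 : HasDerivAt (fun t => 1 - lam^2*Real.cos t^2) (2*lam^2*Real.cos x*Real.sin x) x := by
    have h := (((Real.hasDerivAt_cos x).fun_pow 2).const_mul (lam^2)).const_sub 1
    convert! h using 1
    push_cast
    ring
  have h2 : HasDerivAt (fun t => Real.sqrt (1 - lam^2*Real.cos t^2))
      (1/(2*σ) * (2*lam^2*Real.cos x*Real.sin x)) x :=
    (Real.hasDerivAt_sqrt (ne_of_gt hpos)).comp x h1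
  have h3 : HasDerivAt (fun t => Real.sin t^3) (3*Real.sin x^2*Real.cos x) x := by
    have h := (Real.hasDerivAt_sin x).fun_pow 3
    convert! h using 1 <;> (try push_cast) <;> (try ring)
  have h4 : HasDerivAt (fun t => Real.sin t^4) (4*Real.sin x^3*Real.cos x) x := by
    have h := (Real.hasDerivAt_sin x).fun_pow 4
    convert! h using 1 <;> (try push_cast) <;> (try ring)
  have h5 : HasDerivAt (fun t => Real.sin t^2) (2*Real.sin x*Real.cos x) x := by
    have h := (Real.hasDerivAt_sin x).fun_pow 2
    convert! h using 1 <;> (try push_cast) <;> (try ring)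
  have hF : HasDerivAt (fun t => -(3/8)*(lam*Real.sin t^3*Real.sqrt (1 - lam^2*Real.cos t^2)
        + lam^2*Real.sin t^4 + (1-lam^2)*Real.sin t^2/2))
      (-(3/8)*(lam*(3*Real.sin x^2*Real.cos x*σ
          + Real.sin x^3*(1/(2*σ) * (2*lam^2*Real.cos x*Real.sin x)))
        + lam^2*(4*Real.sin x^3*Real.cos x) + (1-lam^2)*(2*Real.sin x*Real.cos x)/2)) x := by
    have hprod := ((h3.fun_mul h2).const_mul lam)
    have := ((hprod.fun_add (h4.const_mul (lam^2))).fun_add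
      ((h5.const_mul (1-lam^2)).div_const 2)).const_mul (-(3/8))
    convert! this using 2 <;> (try push_cast) <;> (try ring)
  convert hF using 1
  have hsc := Real.sin_sq_add_cos_sq x
  have hinv : σ * σ⁻¹ = 1 := mul_inv_cancel₀ (ne_of_gt hσpos)
  linear_combination ((-(3/8 : ℝ))*Real.sin x*Real.cos x)*hσsq
    + ((3/8 : ℝ)*lam^2*Real.sin x*Real.cos x)*hsc
    + (-(9/8 : ℝ)*lam*Real.sin x^2*Real.cos x*σ - (9/8 : ℝ)*lam^2*Real.sin x^3*Real.cos x
       - (3/8 : ℝ)*Real.sin x*Real.cos x*σ^2)*hinv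

lemma outer_lt {lam : ℝ} (hl0 : 0 < lam) (hl : lam < 1) :
    ∫ x in (-(π/2))..(π/2), gfun lam x * Real.sin x * Real.cos x = -(3*lam/4) := by
  have hcongr : Set.EqOn (fun x => gfun lam x * Real.sin x * Real.cos x)
      (fun x => -((3/8) * ((lam * Real.sin x + Real.sqrt (1 - lam^2*Real.cos x^2))^3
          / Real.sqrt (1 - lam^2*Real.cos x^2)) * Real.sin x * Real.cos x))
      (Set.uIcc (-(π/2)) (π/2)) := by
    intro x _
    simp only [gfun, sin_zeta]
    ring
  rw [intervalIntegral.integral_congr hcongr]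
  have hcont : Continuous fun x => -((3/8) * ((lam * Real.sin x
      + Real.sqrt (1 - lam^2*Real.cos x^2))^3
      / Real.sqrt (1 - lam^2*Real.cos x^2)) * Real.sin x * Real.cos x) := by
    have hden : Continuous fun x : ℝ => Real.sqrt (1 - lam^2*Real.cos x^2) :=
      Real.continuous_sqrt.comp (cont_inner lam)
    have hdenne : ∀ x : ℝ, Real.sqrt (1 - lam^2*Real.cos x^2) ≠ 0 := by
      intro x
      refine ne_of_gt (Real.sqrt_pos.2 ?_)
      nlinarith [Real.cos_sq_le_one x, sq_nonneg (Real.cos x)]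
    have hnum : Continuous fun x : ℝ => (lam * Real.sin x
        + Real.sqrt (1 - lam^2*Real.cos x^2))^3 :=
      ((continuous_const.mul Real.continuous_sin).add hden).pow 3
    exact (((continuous_const.mul (hnum.div hden hdenne)).mul
      Real.continuous_sin).mul Real.continuous_cos).neg
  rw [intervalIntegral.integral_eq_sub_of_hasDerivAt
    (fun x _ => hasDeriv_F hl0 hl x) (hcont.intervalIntegrable _ _)]
  simp [Real.sin_pi_div_two, Real.cos_pi_div_two]
  ring

lemma outer_one :
    ∫ x in (-(π/2))..(π/2), gfun 1 x * Real.sin x * Real.cos x = -(3*(1:ℝ)/4) := by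
  have key₁ : ∀ x : ℝ, 0 ≤ Real.sin x →
      gfun 1 x * Real.sin x * Real.cos x = -3*Real.sin x^3*Real.cos x := by
    intro x hs
    have hσ : Real.sin (zeta x 1) = Real.sin x := by
      rw [sin_zeta]
      have : 1 - 1^2 * Real.cos x^2 = Real.sin x^2 := by
        have := Real.sin_sq_add_cos_sq x; linarith
      rw [this, Real.sqrt_sq_eq_abs, abs_of_nonneg hs]
    rw [gfun, hσ]
    rcases eq_or_lt_of_le hs with hz | hpos
    · rw [← hz]; ring_nf
      try simp
    · have hne : Real.sin x ≠ 0 := ne_of_gt hpos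
      field_simp
      ring
  have key₂ : ∀ x : ℝ, Real.sin x ≤ 0 → gfun 1 x * Real.sin x * Real.cos x = 0 := by
    intro x hs
    have hσ : Real.sin (zeta x 1) = -Real.sin x := by
      rw [sin_zeta]
      have : 1 - 1^2 * Real.cos x^2 = Real.sin x^2 := by
        have := Real.sin_sq_add_cos_sq x; linarith
      rw [this, Real.sqrt_sq_eq_abs, abs_of_nonpos hs]
    rw [gfun, hσ]
    have : (1 : ℝ) * Real.sin x + -Real.sin x = 0 := by ring
    rw [this]
    simp
  have hpi : (0:ℝ) ≤ π/2 := by linarith [Real.pi_pos]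
  have e₁ : Set.EqOn (fun x => gfun 1 x * Real.sin x * Real.cos x) (fun _ => (0:ℝ))
      (Set.uIcc (-(π/2)) 0) := by
    intro x hx
    rw [Set.uIcc_of_le (by linarith), Set.mem_Icc] at hx
    exact key₂ x (Real.sin_nonpos_of_nonpos_of_neg_pi_le hx.2 (by linarith))
  have e₂ : Set.EqOn (fun x => gfun 1 x * Real.sin x * Real.cos x)
      (fun x => -3*Real.sin x^3*Real.cos x) (Set.uIcc 0 (π/2)) := by
    intro x hx
    rw [Set.uIcc_of_le hpi, Set.mem_Icc] at hx
    exact key₁ x (Real.sin_nonneg_of_nonneg_of_le_pi hx.1 (by linarith [Real.pi_pos]))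
  have i₁ : IntervalIntegrable (fun x => gfun 1 x * Real.sin x * Real.cos x)
      volume (-(π/2)) 0 := by
    apply (intervalIntegrable_const (c := (0:ℝ))).congr_ae
    rw [Filter.EventuallyEq]
    filter_upwards [ae_restrict_mem measurableSet_uIoc] with x hx
    exact (e₁ (Set.uIoc_subset_uIcc hx)).symm
  have i₂ : IntervalIntegrable (fun x => gfun 1 x * Real.sin x * Real.cos x)
      volume 0 (π/2) := by
    apply IntervalIntegrable.congr_ae
      (f := fun x => -3*Real.sin x^3*Real.cos x)
    · exact ((continuous_const.mul (Real.continuous_sin.pow 3)).mul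
        Real.continuous_cos).intervalIntegrable _ _
    · rw [Filter.EventuallyEq]
      filter_upwards [ae_restrict_mem measurableSet_uIoc] with x hx
      exact (e₂ (Set.uIoc_subset_uIcc hx)).symm
  rw [← intervalIntegral.integral_add_adjacent_intervals i₁ i₂]
  have v₁ : ∫ x in (-(π/2))..0, gfun 1 x * Real.sin x * Real.cos x = 0 := by
    rw [intervalIntegral.integral_congr e₁]
    simp
  have v₂ : ∫ x in (0:ℝ)..(π/2), gfun 1 x * Real.sin x * Real.cos x = -(3/4) := by
    rw [intervalIntegral.integral_congr e₂]
    have hd : ∀ x ∈ Set.uIcc (0:ℝ) (π/2), HasDerivAt (fun t => -(3/4)*Real.sin t^4)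
        (-3*Real.sin x^3*Real.cos x) x := by
      intro x _
      have h := ((Real.hasDerivAt_sin x).fun_pow 4).const_mul (-(3/4) : ℝ)
      convert! h using 1
      push_cast
      ring
    rw [intervalIntegral.integral_eq_sub_of_hasDerivAt hd
      (((continuous_const.mul (Real.continuous_sin.pow 3)).mul
        Real.continuous_cos).intervalIntegrable _ _)]
    simp [Real.sin_pi_div_two]
    try norm_num
  rw [v₁, v₂]
  norm_num

lemma int_cI_eq {lam : ℝ} (hl0 : 0 < lam) (hl : lam ≤ 1) :
    ∫ p, cI lam p ∂nuProd = -(3*lam/4) := by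
  rw [nuProd_integral_eq _ (hint_cI hl0 hl)]
  have hin : ∀ x : ℝ, (∫ y, 1/2*Real.cos x*Real.cos y * cI lam (x, y) ∂muI)
      = gfun lam x * Real.sin x * Real.cos x := by
    intro x
    have e : (fun y => 1/2*Real.cos x*Real.cos y * cI lam (x, y))
        = fun y => 1/2*Real.cos x*Real.cos y * (gfun lam x * (Real.sin x + Real.sin y)) := by
      funext y
      simp only [cI, gfun]
      ring
    rw [e, inner_int x (gfun lam x)]
  simp_rw [hin]
  rw [muI, MeasureTheory.integral_Icc_eq_integral_Ioc,
    ← intervalIntegral.integral_of_le hle]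
  rcases lt_or_eq_of_le hl with hlt | heq
  · exact outer_lt hl0 hlt
  · rw [heq]
    exact outer_one


lemma Icc_Ici_inter {x₀ : ℝ} (h : -(π/2) ≤ x₀) :
    Set.Icc (-(π/2)) (π/2) ∩ Set.Ici x₀ = Set.Icc x₀ (π/2) := by
  ext t
  simp only [Set.mem_inter_iff, Set.mem_Icc, Set.mem_Ici]
  constructor
  · rintro ⟨⟨h1, h2⟩, h3⟩
    exact ⟨h3, h2⟩
  · rintro ⟨h1, h2⟩
    exact ⟨⟨by linarith, h2⟩, h1⟩

noncomputable def hfun (lam x : ℝ) : ℝ :=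
  -((3/4) * ((lam^3 * Real.sin x ^ 3 + 3 * lam * Real.sin x * Real.sin (zeta x lam) ^ 2)
      / Real.sin (zeta x lam)))

section Gt
variable {lam : ℝ} (hl : 1 < lam)
include hl

lemma hl0' : 0 < lam := by linarith

lemma hx₀pos : 0 < Real.arccos (1/lam) :=
  Real.arccos_pos.2 (by rw [div_lt_one (by linarith)]; linarith)

lemma hx₀le : Real.arccos (1/lam) ≤ π/2 :=
  Real.arccos_le_pi_div_two.2 (by positivity)

lemma hcosx₀ : Real.cos (Real.arccos (1/lam)) = 1/lam := by
  have h0 : (0:ℝ) < 1/lam := by positivity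
  exact Real.cos_arccos (by linarith) (le_of_lt (by rw [div_lt_one (by linarith)]; linarith))

lemma hsqpos : ∀ x ∈ Set.Ioo (Real.arccos (1/lam)) (π/2), 0 < 1 - lam^2*Real.cos x^2 := by
  intro x hx
  have h1 : Real.cos x < 1/lam := by
    rw [← hcosx₀ hl]
    exact Real.cos_lt_cos_of_nonneg_of_le_pi (Real.arccos_nonneg _)
      (by linarith [Real.pi_pos, hx.2]) hx.1
  have h2 : 0 ≤ Real.cos x := Real.cos_nonneg_of_mem_Icc
    ⟨by linarith [hx₀pos hl, hx.1, Real.pi_pos], le_of_lt hx.2⟩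
  have h3 : lam * Real.cos x < 1 := by
    rw [← lt_div_iff₀' (by linarith : (0:ℝ) < lam)]
    exact h1
  nlinarith [mul_nonneg (le_of_lt (by linarith : (0:ℝ) < lam)) h2]

lemma hasDeriv_G {x : ℝ} (hpos : 0 < 1 - lam^2*Real.cos x^2) :
    HasDerivAt (fun t => -(3/4)*lam*Real.sin t^3*Real.sqrt (1 - lam^2*Real.cos t^2))
      (-((3/4) * ((lam^3*Real.sin x^3
          + 3*lam*Real.sin x*Real.sqrt (1 - lam^2*Real.cos x^2)^2)
          / Real.sqrt (1 - lam^2*Real.cos x^2)) * Real.sin x * Real.cos x)) x := by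
  set σ := Real.sqrt (1 - lam^2*Real.cos x^2) with hσdef
  have hσpos : 0 < σ := Real.sqrt_pos.2 hpos
  have h1 : HasDerivAt (fun t => 1 - lam^2*Real.cos t^2) (2*lam^2*Real.cos x*Real.sin x) x := by
    have h := (((Real.hasDerivAt_cos x).fun_pow 2).const_mul (lam^2)).const_sub 1
    convert! h using 1
    push_cast
    ring
  have h2 : HasDerivAt (fun t => Real.sqrt (1 - lam^2*Real.cos t^2))
      (1/(2*σ) * (2*lam^2*Real.cos x*Real.sin x)) x :=
    (Real.hasDerivAt_sqrt (ne_of_gt hpos)).comp x h1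
  have h3 : HasDerivAt (fun t => Real.sin t^3) (3*Real.sin x^2*Real.cos x) x := by
    have h := (Real.hasDerivAt_sin x).fun_pow 3
    convert! h using 1 <;> (try push_cast) <;> (try ring)
  have hG : HasDerivAt (fun t => -(3/4)*lam*Real.sin t^3*Real.sqrt (1 - lam^2*Real.cos t^2))
      ((-(3/4)*lam) * (3*Real.sin x^2*Real.cos x*σ
        + Real.sin x^3*(1/(2*σ) * (2*lam^2*Real.cos x*Real.sin x)))) x := by
    have := (h3.fun_mul h2).const_mul (-(3/4)*lam)
    convert! this using 2 <;> (try push_cast) <;> (try ring)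
  convert hG using 1
  have hinv : σ * σ⁻¹ = 1 := mul_inv_cancel₀ (ne_of_gt hσpos)
  linear_combination (-(9/4 : ℝ)*lam*Real.sin x^2*Real.cos x*σ)*hinv

omit hl in
lemma Af_eqOn : Set.EqOn (fun x => hfun lam x * Real.sin x * Real.cos x)
    (fun x => -((3/4) * ((lam^3*Real.sin x^3
        + 3*lam*Real.sin x*Real.sqrt (1 - lam^2*Real.cos x^2)^2)
        / Real.sqrt (1 - lam^2*Real.cos x^2)) * Real.sin x * Real.cos x)) Set.univ := by
  intro x _
  simp only [hfun, sin_zeta]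
  ring

lemma Af_nonpos : ∀ x ∈ Set.Ioo (Real.arccos (1/lam)) (π/2),
    0 ≤ -(-((3/4) * ((lam^3*Real.sin x^3
        + 3*lam*Real.sin x*Real.sqrt (1 - lam^2*Real.cos x^2)^2)
        / Real.sqrt (1 - lam^2*Real.cos x^2)) * Real.sin x * Real.cos x)) := by
  intro x hx
  have hs : 0 < Real.sin x := Real.sin_pos_of_pos_of_lt_pi
    (lt_trans (hx₀pos hl) hx.1) (by linarith [Real.pi_pos, hx.2])
  have hc : 0 ≤ Real.cos x := Real.cos_nonneg_of_mem_Icc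
    ⟨by linarith [hx₀pos hl, hx.1, Real.pi_pos], le_of_lt hx.2⟩
  have hσ : 0 ≤ Real.sqrt (1 - lam^2*Real.cos x^2) := Real.sqrt_nonneg _
  have hQ : 0 ≤ lam^3*Real.sin x^3 + 3*lam*Real.sin x*Real.sqrt (1 - lam^2*Real.cos x^2)^2 := by
    have h0 : (0:ℝ) < lam := by linarith
    positivity
  rw [neg_neg]
  apply mul_nonneg (mul_nonneg (mul_nonneg (by norm_num) (div_nonneg hQ hσ)) (le_of_lt hs)) hc

lemma AInt : IntervalIntegrable (fun x => hfun lam x * Real.sin x * Real.cos x)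
    volume (Real.arccos (1/lam)) (π/2) := by
  apply IntervalIntegrable.congr_ae
    (f := fun x => -((3/4) * ((lam^3*Real.sin x^3
        + 3*lam*Real.sin x*Real.sqrt (1 - lam^2*Real.cos x^2)^2)
        / Real.sqrt (1 - lam^2*Real.cos x^2)) * Real.sin x * Real.cos x))
  · have h := intervalIntegral.intervalIntegrable_deriv_of_nonneg
      (g := fun t => -(-(3/4)*lam*Real.sin t^3*Real.sqrt (1 - lam^2*Real.cos t^2)))
      (g' := fun x => -(-((3/4) * ((lam^3*Real.sin x^3
          + 3*lam*Real.sin x*Real.sqrt (1 - lam^2*Real.cos x^2)^2)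
          / Real.sqrt (1 - lam^2*Real.cos x^2)) * Real.sin x * Real.cos x)))
      (a := Real.arccos (1/lam)) (b := π/2) ?_ ?_ ?_
    · have := h.neg
      simpa [Pi.neg_def] using this
    · apply Continuous.continuousOn
      exact (((continuous_const.mul (Real.continuous_sin.pow 3)).mul
        (Real.continuous_sqrt.comp (cont_inner lam)))).neg
    · intro x hx
      rw [min_eq_left (hx₀le hl), max_eq_right (hx₀le hl)] at hx
      exact (hasDeriv_G hl (hsqpos hl x hx)).neg
    · intro x hx
      rw [min_eq_left (hx₀le hl), max_eq_right (hx₀le hl)] at hx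
      exact Af_nonpos hl x hx
  · exact Filter.Eventually.of_forall fun x => (Af_eqOn (Set.mem_univ x)).symm

lemma outer_gt : ∫ x in (Real.arccos (1/lam))..(π/2),
    hfun lam x * Real.sin x * Real.cos x = -(3*lam/4) := by
  have heqI : Set.EqOn (fun x => hfun lam x * Real.sin x * Real.cos x)
      (fun x => -((3/4) * ((lam^3*Real.sin x^3
          + 3*lam*Real.sin x*Real.sqrt (1 - lam^2*Real.cos x^2)^2)
          / Real.sqrt (1 - lam^2*Real.cos x^2)) * Real.sin x * Real.cos x))
      (Set.uIcc (Real.arccos (1/lam)) (π/2)) :=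
    fun x _ => Af_eqOn (Set.mem_univ x)
  rw [intervalIntegral.integral_congr heqI]
  have hint : IntervalIntegrable (fun x => -((3/4) * ((lam^3*Real.sin x^3
      + 3*lam*Real.sin x*Real.sqrt (1 - lam^2*Real.cos x^2)^2)
      / Real.sqrt (1 - lam^2*Real.cos x^2)) * Real.sin x * Real.cos x))
      volume (Real.arccos (1/lam)) (π/2) := by
    apply (AInt hl).congr_ae
    exact Filter.Eventually.of_forall fun x => (Af_eqOn (Set.mem_univ x))
  rw [intervalIntegral.integral_eq_sub_of_hasDeriv_right_of_le
    (f := fun t => -(3/4)*lam*Real.sin t^3*Real.sqrt (1 - lam^2*Real.cos t^2))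
    (hx₀le hl) ?_ ?_ hint]
  · rw [hcosx₀ hl]
    have h1 : 1 - lam^2*(1/lam)^2 = 0 := by field_simp [show lam ≠ 0 by linarith]; norm_num
    rw [h1]
    simp [Real.sin_pi_div_two, Real.cos_pi_div_two, Real.sqrt_zero, Real.sqrt_one]
    ring
  · apply Continuous.continuousOn
    exact ((continuous_const.mul (Real.continuous_sin.pow 3)).mul
      (Real.continuous_sqrt.comp (cont_inner lam)))
  · intro x hx
    exact (hasDeriv_G hl (hsqpos hl x hx)).hasDerivWithinAt

end Gt

section Gt2
variable {lam : ℝ} (hl : 1 < lam)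
include hl

lemma chiA_int : Integrable (Set.indicator (Set.Ici (Real.arccos (1/lam)))
    (fun x => hfun lam x * Real.sin x * Real.cos x)) muI := by
  rw [integrable_indicator_iff measurableSet_Ici]
  unfold IntegrableOn
  rw [muI, Measure.restrict_restrict measurableSet_Ici, Set.inter_comm,
    Icc_Ici_inter (by linarith [hx₀pos hl, Real.pi_pos])]
  have h := (AInt hl).1
  rw [← integrableOn_Icc_iff_integrableOn_Ioc] at h
  exact h

lemma meas_cI' : Measurable (cI' lam) := by
  have hden : Measurable fun p : ℝ × ℝ => Real.sin (zeta p.1 lam) :=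
    ((cont_sin_zeta lam).measurable).comp measurable_fst
  have hnum : Measurable fun p : ℝ × ℝ =>
      lam^3 * Real.sin p.1 ^ 3 + 3 * lam * Real.sin p.1 * Real.sin (zeta p.1 lam) ^ 2 :=
    (measurable_const.mul ((Real.measurable_sin.comp measurable_fst).pow_const 3)).add
      ((measurable_const.mul (Real.measurable_sin.comp measurable_fst)).mul (hden.pow_const 2))
  have hbr : Measurable fun p : ℝ × ℝ =>
      -((3/4) * ((lam^3 * Real.sin p.1 ^ 3
          + 3 * lam * Real.sin p.1 * Real.sin (zeta p.1 lam) ^ 2)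
        / Real.sin (zeta p.1 lam)) * (Real.sin p.1 + Real.sin p.2)) :=
    ((measurable_const.mul (hnum.div hden)).mul
      ((Real.measurable_sin.comp measurable_fst).add
        (Real.measurable_sin.comp measurable_snd))).neg
  unfold cI'
  exact Measurable.ite (measurableSet_le measurable_const measurable_fst) hbr measurable_const

lemma hint_cI' : Integrable
    (fun p : ℝ × ℝ => (1/2)*Real.cos p.1*Real.cos p.2 * cI' lam p) (muI.prod muI) := by
  set x₀ := Real.arccos (1/lam) with hx₀def
  have hs₀ : 0 < Real.sin x₀ := Real.sin_pos_of_pos_of_lt_pi (hx₀pos hl)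
    (by linarith [hx₀le hl, Real.pi_pos])
  apply Integrable.mono' (g := fun p : ℝ × ℝ => ((Real.sin x₀)⁻¹
      * |Set.indicator (Set.Ici x₀) (fun x => hfun lam x * Real.sin x * Real.cos x) p.1|)
      * |Real.cos p.2|)
  · exact Integrable.mul_prod (((chiA_int hl).abs).const_mul _)
      ((integrable_muI Real.continuous_cos).abs)
  · exact (((measurable_const.mul (Real.measurable_cos.comp measurable_fst)).mul
      (Real.measurable_cos.comp measurable_snd)).mul (meas_cI' hl)).aestronglyMeasurable
  · rw [← restrict_sq]
    filter_upwards [ae_restrict_mem (measurableSet_Icc.prod measurableSet_Icc)] with p hp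
    rw [Real.norm_eq_abs]
    by_cases hc : x₀ ≤ p.1
    · have hmem : p.1 ∈ Set.Ici x₀ := hc
      rw [Set.indicator_of_mem hmem]
      have hss : Real.sin x₀ ≤ Real.sin p.1 := by
        apply Real.strictMonoOn_sin.monotoneOn
          ⟨by linarith [hx₀pos hl, Real.pi_pos], hx₀le hl⟩ hp.1 hc
      have hsp : 0 < Real.sin p.1 := lt_of_lt_of_le hs₀ hss
      have hce : cI' lam p = hfun lam p.1 * (Real.sin p.1 + Real.sin p.2) := by
        rw [cI', if_pos hc, hfun]
        ring
      rw [hce]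
      have habs : |Real.sin p.1 + Real.sin p.2| ≤ 2 := by
        have := Real.abs_sin_le_one p.1
        have := Real.abs_sin_le_one p.2
        calc |Real.sin p.1 + Real.sin p.2| ≤ |Real.sin p.1| + |Real.sin p.2| := abs_add_le _ _
          _ ≤ 2 := by linarith
      have e1 : |1/2*Real.cos p.1*Real.cos p.2 * (hfun lam p.1
          * (Real.sin p.1 + Real.sin p.2))|
          = 1/2 * |Real.cos p.1| * |Real.cos p.2| * |hfun lam p.1|
            * |Real.sin p.1 + Real.sin p.2| := by
        rw [abs_mul, abs_mul, abs_mul, abs_mul,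
          abs_of_pos (show (0:ℝ) < 1/2 by norm_num)]
        ring
      have e2 : |hfun lam p.1 * Real.sin p.1 * Real.cos p.1|
          = |hfun lam p.1| * Real.sin p.1 * |Real.cos p.1| := by
        rw [abs_mul, abs_mul, abs_of_pos hsp]
      rw [e1, e2]
      have h1 : (Real.sin x₀) * ((1/2) * |Real.cos p.1| * |Real.cos p.2| * |hfun lam p.1|
          * |Real.sin p.1 + Real.sin p.2|)
          ≤ |hfun lam p.1| * Real.sin p.1 * |Real.cos p.1| * |Real.cos p.2| := by
        have hABH : 0 ≤ |Real.cos p.1| * |Real.cos p.2| * |hfun lam p.1| := by positivity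
        have k1 : 0 ≤ (Real.sin x₀ * (|Real.cos p.1| * |Real.cos p.2| * |hfun lam p.1|))
            * (2 - |Real.sin p.1 + Real.sin p.2|) :=
          mul_nonneg (mul_nonneg (le_of_lt hs₀) hABH) (by linarith)
        have k2 : 0 ≤ (Real.sin p.1 - Real.sin x₀)
            * (|Real.cos p.1| * |Real.cos p.2| * |hfun lam p.1|) :=
          mul_nonneg (by linarith) hABH
        nlinarith [k1, k2]
      rw [← sub_nonneg]
      have h2 : (Real.sin x₀)⁻¹ * (|hfun lam p.1| * Real.sin p.1 * |Real.cos p.1|)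
          * |Real.cos p.2| - (1/2) * |Real.cos p.1| * |Real.cos p.2| * |hfun lam p.1|
          * |Real.sin p.1 + Real.sin p.2|
          = (Real.sin x₀)⁻¹ * ((|hfun lam p.1| * Real.sin p.1 * |Real.cos p.1| * |Real.cos p.2|)
            - Real.sin x₀ * ((1/2) * |Real.cos p.1| * |Real.cos p.2| * |hfun lam p.1|
            * |Real.sin p.1 + Real.sin p.2|)) := by
        field_simp
      rw [h2]
      apply mul_nonneg (by positivity)
      linarith [h1]
    · have hce : cI' lam p = 0 := by rw [cI', if_neg hc]
      rw [hce, mul_zero, abs_zero]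
      positivity

lemma int_cI'_eq : ∫ p, cI' lam p ∂nuProd = -(3*lam/4) := by
  rw [nuProd_integral_eq _ (hint_cI' hl)]
  set x₀ := Real.arccos (1/lam) with hx₀def
  have hin : ∀ x : ℝ, (∫ y, 1/2*Real.cos x*Real.cos y * cI' lam (x, y) ∂muI)
      = (if x₀ ≤ x then hfun lam x else 0) * Real.sin x * Real.cos x := by
    intro x
    have e : (fun y => 1/2*Real.cos x*Real.cos y * cI' lam (x, y))
        = fun y => 1/2*Real.cos x*Real.cos y
          * ((if x₀ ≤ x then hfun lam x else 0)*(Real.sin x + Real.sin y)) := by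
      funext y
      by_cases hc : x₀ ≤ x
      · simp only [cI', hfun, if_pos hc, if_pos (show Real.arccos (1/lam) ≤ x from hc)]
        ring
      · simp only [cI', if_neg hc, if_neg (show ¬ Real.arccos (1/lam) ≤ x from hc)]
        ring
    rw [e, inner_int x _]
  simp_rw [hin]
  have e2 : (fun x => (if x₀ ≤ x then hfun lam x else 0) * Real.sin x * Real.cos x)
      = Set.indicator (Set.Ici x₀) (fun x => hfun lam x * Real.sin x * Real.cos x) := by
    funext x
    rw [Set.indicator_apply]
    by_cases hc : x₀ ≤ x <;> simp [Set.mem_Ici, hc]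
  rw [muI, e2, MeasureTheory.setIntegral_indicator measurableSet_Ici,
    Icc_Ici_inter (by linarith [hx₀pos hl, Real.pi_pos]),
    MeasureTheory.integral_Icc_eq_integral_Ioc,
    ← intervalIntegral.integral_of_le (hx₀le hl)]
  exact outer_gt hl

end Gt2


theorem stmt_12 :
    nuProd.map Prod.fst = gammaM ∧
    nuProd.map Prod.snd = gammaM ∧
    nuProd.map Prod.swap = nuProd ∧
    ∀ lam : ℝ, 0 < lam → RI nuProd lam = -(3 * lam / 4) := by
  refine ⟨part1, part2, part3, fun lam hl0 => ?_⟩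
  rw [RI]
  by_cases hl : lam ≤ 1
  · rw [if_pos hl]
    exact int_cI_eq hl0 hl
  · rw [if_neg hl]
    exact int_cI'_eq (by linarith [not_le.1 hl])
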